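/- arXiv:2511.12967 — 2 statements merged into one kernel-verified Lean document; each statement's English description precedes it below -/
import Mathlib

section
/- Specialize to $n = 2$: the light cone is $\mathcal{P}_2 = \{(y_1, y_2, y_3) \in \mathbb{R}^3 : y_1 > 0,\ y_2 - y_3^2/y_1 > 0\}$. For $t = (t_1, t_2, t_3) \in \mathcal{P}_2$ and $s_1 > -3/2$, $s_2 > -1$, one has $\int_{\mathcal{P}_2} e^{-4\pi (y_1 t_1 + y_2 t_2 + y_3 t_3)} y_1^{s_1} \left(y_2 - \frac{y_3^2}{y_1}\right)^{s_2} dy_1\, dy_2\, dy_3 = \frac{\Gamma(s_2+1)\,\Gamma(s_1 + 3/2)}{2^{2 s_2 + 3} \pi^{s_1 + s_2 + 5/2}} \cdot t_2^{-s_2 - 3/2} \left(4 t_1 - \frac{t_3^2}{t_2}\right)^{-s_1 - 3/2}$. -/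
open Real MeasureTheory Set

-- shift lemma
lemma shift_Ioi (f : ℝ → ℝ) (c : ℝ) :
    ∫ x in Ioi c, f x = ∫ x in Ioi (0:ℝ), f (x + c) := by
  rw [← integral_indicator measurableSet_Ioi, ← integral_indicator measurableSet_Ioi,
    ← integral_add_right_eq_self (fun x => (Ioi c).indicator f x) c]
  congr 1; ext x
  by_cases h : x ∈ Ioi (0:ℝ)
  · rw [indicator_of_mem h, indicator_of_mem (by simpa using h : x + c ∈ Ioi c)]
  · rw [indicator_of_notMem h, indicator_of_notMem (by simpa using h)]

lemma shift_Ioi_integrable {f : ℝ → ℝ} {c : ℝ}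
    (h : IntegrableOn (fun x => f (x + c)) (Ioi (0:ℝ))) : IntegrableOn f (Ioi c) := by
  rw [← integrable_indicator_iff measurableSet_Ioi] at h ⊢
  have := h.comp_sub_right c
  refine this.congr (Filter.Eventually.of_forall fun x => ?_)
  by_cases hx : x ∈ Ioi c
  · have h2 : x - c ∈ Ioi (0:ℝ) := by simpa using hx
    simp only [indicator_of_mem h2, indicator_of_mem hx, sub_add_cancel]
  · have h2 : x - c ∉ Ioi (0:ℝ) := by simpa using hx
    simp only [indicator_of_notMem h2, indicator_of_notMem hx]

-- Gamma-type integral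
lemma gamma_int {s b : ℝ} (hs : -1 < s) (hb : 0 < b) :
    ∫ x in Ioi (0:ℝ), x ^ s * Real.exp (-(b * x)) = (1/b) ^ (s+1) * Real.Gamma (s+1) := by
  have := integral_rpow_mul_exp_neg_mul_Ioi (a := s+1) (r := b) (by linarith) hb
  simpa using this

lemma gamma_int_integrable {s b : ℝ} (hs : -1 < s) (hb : 0 < b) :
    IntegrableOn (fun x => x ^ s * Real.exp (-(b * x))) (Ioi (0:ℝ)) := by
  have := integrableOn_rpow_mul_exp_neg_mul_rpow (p := 1) hs one_pos hb
  simpa [Real.rpow_one] using this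

lemma gaussian_lin {a : ℝ} (b : ℝ) (ha : 0 < a) :
    ∫ x : ℝ, Real.exp (-(a * x^2 + b * x)) = Real.exp (b^2/(4*a)) * Real.sqrt (π / a) := by
  have key : ∀ x : ℝ, Real.exp (-(a * x^2 + b * x))
      = Real.exp (b^2/(4*a)) * Real.exp (-(a * (x + b/(2*a))^2)) := by
    intro x
    rw [← Real.exp_add]
    congr 1
    field_simp
    ring
  simp_rw [key]
  rw [integral_const_mul, integral_add_right_eq_self (fun x => Real.exp (-(a * x^2))) (b/(2*a))]
  have := integral_gaussian a
  simp_rw [neg_mul] at this ⊢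
  rw [this]

lemma gaussian_lin_integrable {a : ℝ} (b : ℝ) (ha : 0 < a) :
    Integrable (fun x : ℝ => Real.exp (-(a * x^2 + b * x))) := by
  have h1 : Integrable (fun x : ℝ => Real.exp (-(a * x^2))) := by
    simpa [neg_mul] using integrable_exp_neg_mul_sq ha
  have h2 := (h1.comp_add_right (b/(2*a))).const_mul (Real.exp (b^2/(4*a)))
  refine h2.congr (Filter.Eventually.of_forall fun x => ?_)
  show Real.exp _ * Real.exp _ = _
  rw [← Real.exp_add]
  congr 1
  field_simp
  ring

lemma inner1 {b s : ℝ} (hs : -1 < s) (hb : 0 < b) (q A : ℝ) :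
    ∫ x in Ioi q, A * Real.exp (-(b*x)) * (x - q) ^ s
      = A * Real.exp (-(b*q)) * ((1/b) ^ (s+1) * Real.Gamma (s+1)) := by
  rw [shift_Ioi]
  have : ∀ x : ℝ, A * Real.exp (-(b*(x+q))) * (x + q - q) ^ s
      = (A * Real.exp (-(b*q))) * (x ^ s * Real.exp (-(b*x))) := by
    intro x
    rw [show -(b*(x+q)) = -(b*q) + -(b*x) by ring, Real.exp_add]
    ring_nf
  simp_rw [this]
  rw [integral_const_mul, gamma_int hs hb]

lemma inner1_integrable {b s : ℝ} (hs : -1 < s) (hb : 0 < b) (q A : ℝ) :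
    IntegrableOn (fun x => A * Real.exp (-(b*x)) * (x - q) ^ s) (Ioi q) := by
  apply shift_Ioi_integrable
  have h := ((gamma_int_integrable hs hb).const_mul (A * Real.exp (-(b*q))))
  refine h.congr (Filter.Eventually.of_forall fun x => ?_)
  show (A * Real.exp (-(b*q))) * (x ^ s * Real.exp (-(b*x)))
      = A * Real.exp (-(b*(x+q))) * (x + q - q) ^ s
  rw [show -(b*(x+q)) = -(b*q) + -(b*x) by ring, Real.exp_add]
  ring_nf
lemma const_simp {s1 s2 t2 D : ℝ} (ht2 : 0 < t2) (hD : 0 < D) :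
    (1/(4*π*t2))^(s2+1) * Real.Gamma (s2+1) * (1/(2*Real.sqrt t2))
      * ((1/(π*D))^(s1+3/2) * Real.Gamma (s1+3/2))
    = Real.Gamma (s2+1) * Real.Gamma (s1+3/2) /
          ((2:ℝ) ^ (2*s2 + 3) * π ^ (s1 + s2 + 5/2)) * t2 ^ (-s2 - 3/2) * D ^ (-s1 - 3/2) := by
  have hπ := pi_pos
  have h4 : (2:ℝ)^(-2:ℝ) = 4⁻¹ := by
    rw [show (-2:ℝ) = -((2:ℕ):ℝ) by norm_num, Real.rpow_neg (by norm_num), Real.rpow_natCast]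
    norm_num
  have hA : (1/(4*π*t2))^(s2+1) = (2:ℝ)^((-2:ℝ)*(s2+1)) * π^(-(s2+1)) * t2^(-(s2+1)) := by
    rw [show (1/(4*π*t2)) = (2:ℝ)^(-2:ℝ) * π^(-1:ℝ) * t2^(-1:ℝ) by
          rw [h4, Real.rpow_neg_one, Real.rpow_neg_one]; field_simp]
    rw [Real.mul_rpow (by positivity) (by positivity), Real.mul_rpow (by positivity) (by positivity),
      ← Real.rpow_mul (by norm_num), ← Real.rpow_mul hπ.le, ← Real.rpow_mul ht2.le]
    norm_num
  have hB : (1/(2*Real.sqrt t2)) = (2:ℝ)^(-1:ℝ) * t2^(-(1/2):ℝ) := by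
    rw [Real.sqrt_eq_rpow, Real.rpow_neg_one, Real.rpow_neg ht2.le]
    field_simp
  have hC : (1/(π*D))^(s1+3/2) = π^(-(s1+3/2)) * D^(-(s1+3/2)) := by
    rw [show (1/(π*D)) = π^(-1:ℝ) * D^(-1:ℝ) by
          rw [Real.rpow_neg_one, Real.rpow_neg_one]; field_simp]
    rw [Real.mul_rpow (by positivity) (by positivity), ← Real.rpow_mul hπ.le,
      ← Real.rpow_mul hD.le]
    norm_num
  have hR : Real.Gamma (s2+1) * Real.Gamma (s1+3/2) /
          ((2:ℝ) ^ (2*s2 + 3) * π ^ (s1 + s2 + 5/2))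
      = Real.Gamma (s2+1) * Real.Gamma (s1+3/2) * ((2:ℝ)^(-(2*s2+3)) * π^(-(s1+s2+5/2))) := by
    rw [Real.rpow_neg (by norm_num), Real.rpow_neg hπ.le]
    field_simp
  rw [hA, hB, hC, hR]
  have e2 : (2:ℝ)^(-(2*s2+3)) = (2:ℝ)^((-2:ℝ)*(s2+1)) * (2:ℝ)^(-1:ℝ) := by
    rw [← Real.rpow_add two_pos]; ring_nf
  have eπ : π^(-(s1+s2+5/2)) = π^(-(s2+1)) * π^(-(s1+3/2)) := by
    rw [← Real.rpow_add hπ]; ring_nf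
  have et : t2^(-s2-3/2) = t2^(-(s2+1)) * t2^(-(1/2):ℝ) := by
    rw [← Real.rpow_add ht2]; ring_nf
  have eD : D^(-s1-3/2) = D^(-(s1+3/2)) := by ring_nf
  rw [e2, eπ, et, eD]
  ring

theorem stmt_4 (s1 s2 t1 t2 t3 : ℝ)
    (ht : 0 < t1 ∧ 0 < t2 - t3 ^ 2 / t1)
    (hs1 : -(3/2) < s1) (hs2 : -1 < s2) :
    ∫ y in {y : ℝ × ℝ × ℝ | 0 < y.1 ∧ 0 < y.2.1 - y.2.2 ^ 2 / y.1},
      Real.exp (-(4*π) * (y.1 * t1 + y.2.1 * t2 + y.2.2 * t3)) *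
        y.1 ^ s1 * (y.2.1 - y.2.2 ^ 2 / y.1) ^ s2
      = Real.Gamma (s2 + 1) * Real.Gamma (s1 + 3/2) /
          ((2:ℝ) ^ (2*s2 + 3) * π ^ (s1 + s2 + 5/2)) *
        t2 ^ (-s2 - 3/2) * (4*t1 - t3 ^ 2 / t2) ^ (-s1 - 3/2) := by
  obtain ⟨ht1, ht2'⟩ := ht
  have hπ := pi_pos
  have ht2 : 0 < t2 := lt_of_le_of_lt (by positivity : (0:ℝ) ≤ t3^2/t1) (by linarith)
  have hD : 0 < 4*t1 - t3^2/t2 := by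
    have h1 : t3^2/t1 < t2 := by linarith
    have h2 : t3^2 < t1 * t2 := by
      have := (div_lt_iff₀ ht1).mp h1
      linarith
    have h3 : t3^2/t2 < t1 := (div_lt_iff₀ ht2).mpr (by linarith)
    linarith
  set D : ℝ := 4*t1 - t3^2/t2 with hDdef
  have hb : 0 < 4*π*t2 := by positivity
  set f : ℝ × ℝ × ℝ → ℝ := fun y =>
    Real.exp (-(4*π) * (y.1 * t1 + y.2.1 * t2 + y.2.2 * t3)) *
      y.1 ^ s1 * (y.2.1 - y.2.2 ^ 2 / y.1) ^ s2 with hfdef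
  set S : Set (ℝ × ℝ × ℝ) := {y | 0 < y.1 ∧ 0 < y.2.1 - y.2.2 ^ 2 / y.1} with hSdef
  have hSm : MeasurableSet S := by
    rw [hSdef, Set.setOf_and]
    exact (measurableSet_lt measurable_const measurable_fst).inter
      (measurableSet_lt measurable_const
        (measurable_snd.fst.sub ((measurable_snd.snd.pow_const 2).div measurable_fst)))
  have hfm : Measurable f := by
    rw [hfdef]; fun_prop
  set F : ℝ × ℝ × ℝ → ℝ := S.indicator f with hFdef
  have hFm : Measurable F := hfm.indicator hSm
  have hFnn : ∀ y, 0 ≤ F y := by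
    intro y
    rw [hFdef]
    by_cases hy : y ∈ S
    · rw [indicator_of_mem hy]
      obtain ⟨h1, h2⟩ := hy
      have : (0:ℝ) ≤ (y.2.1 - y.2.2^2/y.1) ^ s2 := Real.rpow_nonneg (le_of_lt h2) _
      have h3 : (0:ℝ) ≤ y.1 ^ s1 := Real.rpow_nonneg (le_of_lt h1) _
      positivity
    · rw [indicator_of_notMem hy]
  -- constants
  set C2 : ℝ := (1/(4*π*t2))^(s2+1) * Real.Gamma (s2+1) with hC2def
  set g1 : ℝ → ℝ → ℝ := fun y1 y3 =>
    (Real.exp (-(4*π)*(y1*t1+y3*t3)) * y1^s1) * Real.exp (-(4*π*t2*(y3^2/y1))) * C2 with hg1def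
  set g2 : ℝ → ℝ := fun y1 =>
    (Real.exp (-(4*π*t1*y1)) * y1^s1 * C2) * Real.exp ((4*π*t3)^2/(4*(4*π*t2/y1)))
      * Real.sqrt (π / (4*π*t2/y1)) with hg2def
  -- slice description
  have slice_eq : ∀ y1 : ℝ, 0 < y1 → ∀ y3 y2 : ℝ,
      F (y1,(y2,y3)) = (Ioi (y3^2/y1)).indicator
        (fun x => (Real.exp (-(4*π)*(y1*t1+y3*t3)) * y1^s1)
          * Real.exp (-(4*π*t2*x)) * (x - y3^2/y1)^s2) y2 := by
    intro y1 hy1 y3 y2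
    have hmem : (y1,(y2,y3)) ∈ S ↔ y2 ∈ Ioi (y3^2/y1) := by
      simp only [hSdef, mem_setOf_eq, mem_Ioi]
      constructor
      · rintro ⟨-, h⟩; linarith [sub_pos.mp h]
      · intro h; exact ⟨hy1, by linarith⟩
    by_cases hy2 : y2 ∈ Ioi (y3^2/y1)
    · rw [hFdef, indicator_of_mem (hmem.mpr hy2), indicator_of_mem hy2, hfdef]
      simp only
      rw [show -(4*π) * (y1*t1 + y2*t2 + y3*t3) = -(4*π)*(y1*t1+y3*t3) + -(4*π*t2*y2) by ring,
        Real.exp_add]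
      ring
    · rw [hFdef, indicator_of_notMem (fun h => hy2 (hmem.mp h)), indicator_of_notMem hy2]
  have h_zero : ∀ y1 : ℝ, ¬ (0 < y1) → ∀ p : ℝ × ℝ, F (y1, p) = 0 := by
    intro y1 hy1 p
    rw [hFdef, indicator_of_notMem]
    rintro ⟨h, -⟩
    exact hy1 h
  -- innermost integral
  have h_inner : ∀ y1 : ℝ, 0 < y1 → ∀ y3 : ℝ,
      ∫ y2 : ℝ, F (y1,(y2,y3)) = g1 y1 y3 := by
    intro y1 hy1 y3
    simp_rw [slice_eq y1 hy1 y3]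
    rw [integral_indicator measurableSet_Ioi, inner1 hs2 hb]
  have h_inner_int : ∀ y1 : ℝ, 0 < y1 → ∀ y3 : ℝ,
      Integrable (fun y2 => F (y1,(y2,y3))) := by
    intro y1 hy1 y3
    simp_rw [slice_eq y1 hy1 y3]
    rw [integrable_indicator_iff measurableSet_Ioi]
    exact inner1_integrable hs2 hb _ _
  -- middle step
  have hα : ∀ y1 : ℝ, 0 < y1 → 0 < 4*π*t2/y1 := fun y1 hy1 => by positivity
  have h_g1_eq : ∀ y1 : ℝ, 0 < y1 → ∀ y3 : ℝ,
      g1 y1 y3 = (Real.exp (-(4*π*t1*y1)) * y1^s1 * C2)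
        * Real.exp (-((4*π*t2/y1) * y3^2 + (4*π*t3) * y3)) := by
    intro y1 hy1 y3
    rw [hg1def]
    simp only
    rw [show -(4*π)*(y1*t1+y3*t3) = -(4*π*t1*y1) + -(4*π*t3*y3) by ring, Real.exp_add]
    rw [show -((4*π*t2/y1) * y3^2 + (4*π*t3) * y3)
        = -(4*π*t2*(y3^2/y1)) + -(4*π*t3*y3) by field_simp; ring, Real.exp_add]
    ring
  have h_mid : ∀ y1 : ℝ, 0 < y1 → ∫ y3 : ℝ, g1 y1 y3 = g2 y1 := by
    intro y1 hy1
    simp_rw [h_g1_eq y1 hy1]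
    rw [integral_const_mul, gaussian_lin (4*π*t3) (hα y1 hy1)]
    simp only [hg2def]
    ring
  have h_mid_int : ∀ y1 : ℝ, 0 < y1 → Integrable (g1 y1) := by
    intro y1 hy1
    have h := (gaussian_lin_integrable (4*π*t3) (hα y1 hy1)).const_mul
      (Real.exp (-(4*π*t1*y1)) * y1^s1 * C2)
    refine h.congr (Filter.Eventually.of_forall fun y3 => ?_)
    rw [h_g1_eq y1 hy1 y3]
  -- slice in p integrable
  have h_slice_int : ∀ y1 : ℝ, Integrable (fun p : ℝ × ℝ => F (y1, p)) := by
    intro y1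
    by_cases hy1 : 0 < y1
    · have hm : AEStronglyMeasurable (fun p : ℝ × ℝ => F (y1, p)) volume :=
        (hFm.comp (measurable_const.prodMk measurable_id)).aestronglyMeasurable
      rw [Measure.volume_eq_prod, integrable_prod_iff' hm]
      constructor
      · exact Filter.Eventually.of_forall fun y3 => h_inner_int y1 hy1 y3
      · have : ∀ y3 : ℝ, ∫ y2, ‖F (y1,(y2,y3))‖ = g1 y1 y3 := by
          intro y3
          rw [← h_inner y1 hy1 y3]
          congr 1
          ext y2
          exact Real.norm_of_nonneg (hFnn _)
        simp_rw [this]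
        exact h_mid_int y1 hy1
    · refine (integrable_zero _ _ _).congr ?_
      exact Filter.Eventually.of_forall fun p => (h_zero y1 hy1 p).symm
  -- the y1-marginal
  have h_marg : ∀ y1 : ℝ, ∫ p : ℝ × ℝ, F (y1, p) = (Ioi (0:ℝ)).indicator g2 y1 := by
    intro y1
    by_cases hy1 : 0 < y1
    · rw [indicator_of_mem (mem_Ioi.mpr hy1)]
      rw [Measure.volume_eq_prod, integral_prod_symm _
        (by rw [← Measure.volume_eq_prod]; exact h_slice_int y1)]
      simp_rw [h_inner y1 hy1]
      exact h_mid y1 hy1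
    · rw [indicator_of_notMem (by simpa using hy1)]
      simp_rw [h_zero y1 hy1]
      exact integral_zero _ _
  -- g2 on Ioi 0
  have h_g2_eq : ∀ y1 ∈ Ioi (0:ℝ), g2 y1
      = (C2 * (1/(2*Real.sqrt t2))) * (y1^(s1+1/2) * Real.exp (-(π*D*y1))) := by
    intro y1 hy1
    rw [mem_Ioi] at hy1
    rw [hg2def]
    simp only
    have e1 : (4*π*t3)^2/(4*(4*π*t2/y1)) = π*t3^2*y1/t2 := by
      field_simp
    have e2 : π / (4*π*t2/y1) = y1/(4*t2) := by
      field_simp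
    rw [e1, e2]
    rw [(by
      rw [show y1/(4*t2) = y1 * (1/(4*t2)) by ring, Real.sqrt_mul hy1.le,
        show (1:ℝ)/(4*t2) = (1/(2*Real.sqrt t2))^2 by
          rw [div_pow, mul_pow, Real.sq_sqrt ht2.le]; norm_num,
        Real.sqrt_sq (by positivity)] :
      Real.sqrt (y1/(4*t2)) = Real.sqrt y1 * (1/(2*Real.sqrt t2)))]
    have e4 : Real.exp (-(4*π*t1*y1)) * Real.exp (π*t3^2*y1/t2) = Real.exp (-(π*D*y1)) := by
      rw [← Real.exp_add]
      congr 1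
      rw [hDdef]
      field_simp
      ring
    have e5 : y1 ^ s1 * Real.sqrt y1 = y1 ^ (s1+1/2) := by
      rw [Real.sqrt_eq_rpow, ← Real.rpow_add hy1]
    calc Real.exp (-(4*π*t1*y1)) * y1^s1 * C2 * Real.exp (π*t3^2*y1/t2)
        * (Real.sqrt y1 * (1/(2*Real.sqrt t2)))
        = (C2 * (1/(2*Real.sqrt t2))) * ((y1^s1 * Real.sqrt y1)
            * (Real.exp (-(4*π*t1*y1)) * Real.exp (π*t3^2*y1/t2))) := by ring
      _ = _ := by rw [e4, e5]
  have hπD : 0 < π * D := by positivity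
  have hs1' : (-1:ℝ) < s1 + 1/2 := by linarith
  -- integrability of the marginal
  have h_g2_int : IntegrableOn g2 (Ioi (0:ℝ)) := by
    have h := (gamma_int_integrable hs1' hπD).const_mul (C2 * (1/(2*Real.sqrt t2)))
    refine IntegrableOn.congr_fun ?_ (fun y1 hy1 => (h_g2_eq y1 hy1).symm) measurableSet_Ioi
    refine h.congr (Filter.Eventually.of_forall fun y1 => ?_)
    show C2 * (1/(2*Real.sqrt t2)) * (y1 ^ (s1+1/2) * Real.exp (-(π*D*y1))) = _
    ring_nf
  -- full integrability
  have h_Fint : Integrable F := by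
    rw [Measure.volume_eq_prod, integrable_prod_iff hFm.aestronglyMeasurable]
    constructor
    · exact Filter.Eventually.of_forall fun y1 => h_slice_int y1
    · have : ∀ y1 : ℝ, ∫ p : ℝ × ℝ, ‖F (y1, p)‖ = (Ioi (0:ℝ)).indicator g2 y1 := by
        intro y1
        rw [← h_marg y1]
        congr 1
        ext p
        exact Real.norm_of_nonneg (hFnn _)
      simp_rw [this]
      rwa [integrable_indicator_iff measurableSet_Ioi]
  -- main chain
  rw [← integral_indicator hSm]
  show ∫ y, F y = _
  rw [Measure.volume_eq_prod, integral_prod _ (by rwa [← Measure.volume_eq_prod])]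
  have : ∀ y1 : ℝ, (∫ p : ℝ × ℝ, F (y1, p)) = (Ioi (0:ℝ)).indicator g2 y1 := h_marg
  simp_rw [this]
  rw [integral_indicator measurableSet_Ioi]
  rw [setIntegral_congr_fun measurableSet_Ioi h_g2_eq]
  rw [integral_const_mul, gamma_int hs1' hπD]
  rw [show s1 + 1/2 + 1 = s1 + 3/2 by ring]
  have := const_simp (s1 := s1) (s2 := s2) ht2 hD
  rw [hC2def]
  calc (1/(4*π*t2))^(s2+1) * Real.Gamma (s2+1) * (1/(2*Real.sqrt t2))
      * ((1/(π*D))^(s1+3/2) * Real.Gamma (s1+3/2)) = _ := this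
end

section
/- Let $b = (b_1, b_2, b_3) \in \mathcal{P}_2$ (so $b_1 > 0$, $b_1 b_2 - b_3^2 > 0$). Suppose the real parameters satisfy $\eta_2 > -1$, $\eta_1 > -3/2$, $r_2 > \eta_2 + 3/2$, and $r_1 > \eta_1 + 2$. Then the integral $\int_{\mathcal{P}_2} \Delta^{-\mathbf{r}}(y + b)\, \Delta^{\boldsymbol{\eta}}(y)\, dy$ is finite and equals $C \cdot \Delta^{\boldsymbol{\eta} - \mathbf{r}}(b)\, \Delta(b)^{3/2}$ for a positive constant $C$ depending only on $\mathbf{r}, \boldsymbol{\eta}$, where for $y \in \mathcal{P}_2$, $\Delta^{\mathbf{s}}(y) = y_1^{s_1 - s_2} (y_1 y_2 - y_3^2)^{s_2}$ and $\Delta(y) = y_1 y_2 - y_3^2$. -/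
open Real MeasureTheory Set


lemma det_add_pos {y1 y2 y3 b1 b2 b3 : ℝ} (hy1 : 0 < y1) (hy : 0 < y1*y2-y3^2)
    (hb1 : 0 < b1) (hb : 0 < b1*b2-b3^2) : 0 < (y1+b1)*(y2+b2)-(y3+b3)^2 := by
  have h : y1*b1*((y1+b1)*(y2+b2)-(y3+b3)^2)
      = y1*b1*(y1*y2-y3^2) + y1*b1*(b1*b2-b3^2) + b1^2*(y1*y2-y3^2) + y1^2*(b1*b2-b3^2)
        + (b1*y3-y1*b3)^2 := by ring
  nlinarith [mul_pos hy1 hb1, sq_nonneg (b1*y3-y1*b3), mul_pos (mul_pos hy1 hb1) hy,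
    mul_pos (mul_pos hy1 hb1) hb, mul_pos (mul_pos hb1 hb1) hy, mul_pos (mul_pos hy1 hy1) hb]

lemma beta_integrable {a c : ℝ} (ha : -1 < a) (hc : a + 1 < c) :
    IntegrableOn (fun s : ℝ => s ^ a * (1 + s) ^ (-c)) (Ioi 0) := by
  have hc0 : 0 < c := by linarith
  have hmeas : Measurable (fun s : ℝ => s ^ a * (1 + s) ^ (-c)) := by fun_prop
  have h1 : IntegrableOn (fun s : ℝ => s ^ a * (1 + s) ^ (-c)) (Ioc 0 1) := by
    have hint : IntegrableOn (fun s : ℝ => s ^ a) (Ioc 0 1) :=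
      (intervalIntegral.intervalIntegrable_rpow' ha).1
    refine hint.mono' hmeas.aestronglyMeasurable ?_
    filter_upwards [ae_restrict_mem measurableSet_Ioc] with s hs
    have hs0 : 0 < s := hs.1
    rw [Real.norm_eq_abs, abs_mul, abs_of_nonneg (rpow_nonneg hs0.le _),
      abs_of_nonneg (rpow_nonneg (by linarith) _)]
    have : (1 + s) ^ (-c) ≤ 1 := by
      apply Real.rpow_le_one_of_one_le_of_nonpos (by linarith) (by linarith)
    nlinarith [rpow_nonneg hs0.le a, rpow_nonneg (show (0:ℝ) ≤ 1 + s by linarith) (-c)]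
  have h2 : IntegrableOn (fun s : ℝ => s ^ a * (1 + s) ^ (-c)) (Ioi 1) := by
    have hint : IntegrableOn (fun s : ℝ => s ^ (a - c)) (Ioi 1) :=
      integrableOn_Ioi_rpow_of_lt (by linarith) one_pos
    refine hint.mono' hmeas.aestronglyMeasurable ?_
    filter_upwards [ae_restrict_mem measurableSet_Ioi] with s hs
    have hs1 : (1:ℝ) < s := hs
    have hs0 : 0 < s := by linarith
    rw [Real.norm_eq_abs, abs_mul, abs_of_nonneg (rpow_nonneg hs0.le _),
      abs_of_nonneg (rpow_nonneg (by linarith) _)]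
    have hle : (1 + s) ^ (-c) ≤ s ^ (-c) :=
      Real.rpow_le_rpow_of_nonpos hs0 (by linarith) (by linarith)
    calc s ^ a * (1 + s) ^ (-c) ≤ s ^ a * s ^ (-c) := by
          exact mul_le_mul_of_nonneg_left hle (rpow_nonneg hs0.le _)
      _ = s ^ (a - c) := by rw [← Real.rpow_add hs0]; ring_nf
  have : Ioc (0:ℝ) 1 ∪ Ioi 1 = Ioi 0 := Ioc_union_Ioi_eq_Ioi zero_le_one
  rw [← this]
  exact h1.union h2

lemma beta_pos {a c : ℝ} (ha : -1 < a) (hc : a + 1 < c) :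
    0 < ∫ s in Ioi (0:ℝ), s ^ a * (1 + s) ^ (-c) := by
  rw [setIntegral_pos_iff_support_of_nonneg_ae]
  · have hsub : Ioi (0:ℝ) ⊆ Function.support (fun s : ℝ => s ^ a * (1 + s) ^ (-c)) ∩ Ioi 0 := by
      intro s hs
      have hs0 : (0:ℝ) < s := hs
      refine ⟨?_, hs⟩
      have : 0 < s ^ a * (1 + s) ^ (-c) :=
        mul_pos (rpow_pos_of_pos hs0 _) (rpow_pos_of_pos (by linarith) _)
      exact ne_of_gt this
    calc (0:ENNReal) < volume (Ioi (0:ℝ)) := by simp [Real.volume_Ioi]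
      _ ≤ _ := measure_mono hsub
  · filter_upwards [ae_restrict_mem measurableSet_Ioi] with s hs
    have hs0 : (0:ℝ) < s := hs
    positivity
  · exact beta_integrable ha hc


lemma beta_integrable' {a c : ℝ} (ha : -1 < a) (hc : a + 1 < c) :
    IntegrableOn (fun s : ℝ => s ^ a * (1 + s) ^ (-c)) (Ioi 0) := by
  have hc0 : 0 < c := by linarith
  have hmeas : Measurable (fun s : ℝ => s ^ a * (1 + s) ^ (-c)) := by fun_prop
  have h1 : IntegrableOn (fun s : ℝ => s ^ a * (1 + s) ^ (-c)) (Ioc 0 1) := by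
    have hint : IntegrableOn (fun s : ℝ => s ^ a) (Ioc 0 1) :=
      (intervalIntegral.intervalIntegrable_rpow' ha).1
    refine hint.mono' hmeas.aestronglyMeasurable ?_
    filter_upwards [ae_restrict_mem measurableSet_Ioc] with s hs
    have hs0 : 0 < s := hs.1
    rw [Real.norm_eq_abs, abs_mul, abs_of_nonneg (rpow_nonneg hs0.le _),
      abs_of_nonneg (rpow_nonneg (by linarith) _)]
    have : (1 + s) ^ (-c) ≤ 1 :=
      Real.rpow_le_one_of_one_le_of_nonpos (by linarith) (by linarith)
    nlinarith [rpow_nonneg hs0.le a, rpow_nonneg (show (0:ℝ) ≤ 1 + s by linarith) (-c)]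
  have h2 : IntegrableOn (fun s : ℝ => s ^ a * (1 + s) ^ (-c)) (Ioi 1) := by
    have hint : IntegrableOn (fun s : ℝ => s ^ (a - c)) (Ioi 1) :=
      integrableOn_Ioi_rpow_of_lt (by linarith) one_pos
    refine hint.mono' hmeas.aestronglyMeasurable ?_
    filter_upwards [ae_restrict_mem measurableSet_Ioi] with s hs
    have hs1 : (1:ℝ) < s := hs
    have hs0 : 0 < s := by linarith
    rw [Real.norm_eq_abs, abs_mul, abs_of_nonneg (rpow_nonneg hs0.le _),
      abs_of_nonneg (rpow_nonneg (by linarith) _)]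
    have hle : (1 + s) ^ (-c) ≤ s ^ (-c) :=
      Real.rpow_le_rpow_of_nonpos hs0 (by linarith) (by linarith)
    calc s ^ a * (1 + s) ^ (-c) ≤ s ^ a * s ^ (-c) :=
          mul_le_mul_of_nonneg_left hle (rpow_nonneg hs0.le _)
      _ = s ^ (a - c) := by rw [← Real.rpow_add hs0]; ring_nf
  have : Ioc (0:ℝ) 1 ∪ Ioi 1 = Ioi 0 := Ioc_union_Ioi_eq_Ioi zero_le_one
  rw [← this]; exact h1.union h2

lemma scaled_beta {a c : ℝ} (α γ : ℝ) (ha : -1 < a) (hc : a + 1 < c)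
    (hα : 0 < α) (hγ : 0 < γ) :
    IntegrableOn (fun s : ℝ => s ^ a * (α*s+γ) ^ (-c)) (Ioi 0) ∧
    ∫ s in Ioi (0:ℝ), s ^ a * (α*s+γ) ^ (-c)
      = α ^ (-(a+1)) * γ ^ (a+1-c) * ∫ s in Ioi (0:ℝ), s ^ a * (1+s) ^ (-c) := by
  have hbeta := beta_integrable' ha hc
  set g : ℝ → ℝ := fun s : ℝ => s ^ a * (α*s+γ) ^ (-c) with hg
  set k : ℝ := γ / α with hk
  have hk0 : 0 < k := div_pos hγ hα
  have hcomp : ∀ s ∈ Ioi (0:ℝ), g (k * s)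
      = k ^ a * γ ^ (-c) * (s ^ a * (1+s) ^ (-c)) := by
    intro s hs
    have hs0 : (0:ℝ) < s := hs
    have h1 : α * (k * s) + γ = γ * (1 + s) := by
      rw [hk]; field_simp; ring
    show (k*s) ^ a * (α*(k*s)+γ) ^ (-c) = _
    rw [h1, Real.mul_rpow hk0.le hs0.le, Real.mul_rpow hγ.le (by linarith)]
    ring
  constructor
  · have := integrableOn_Ioi_comp_mul_left_iff g 0 hk0
    rw [mul_zero] at this
    rw [← this]
    exact IntegrableOn.congr_fun (hbeta.const_mul _)
      (fun s hs => (hcomp s hs).symm) measurableSet_Ioi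
  · have hC := integral_comp_mul_left_Ioi g 0 hk0
    rw [mul_zero, smul_eq_mul] at hC
    rw [setIntegral_congr_fun measurableSet_Ioi hcomp, integral_const_mul] at hC
    have hI : ∫ s in Ioi (0:ℝ), g s
        = k * (k ^ a * γ ^ (-c) * ∫ s in Ioi (0:ℝ), s ^ a * (1+s) ^ (-c)) := by
      rw [hC]; field_simp
    rw [hI]
    have hka : k ^ (a+1) = γ ^ (a+1) * α ^ (-(a+1)) := by
      rw [hk, Real.div_rpow hγ.le hα.le, Real.rpow_neg hα.le, div_eq_mul_inv]
    have hk1 : k * k ^ a = k ^ (a + 1) := by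
      rw [Real.rpow_add hk0, Real.rpow_one]; ring
    rw [show k * (k ^ a * γ ^ (-c) * ∫ s in Ioi (0:ℝ), s ^ a * (1+s) ^ (-c))
        = (k * k ^ a) * γ ^ (-c) * ∫ s in Ioi (0:ℝ), s ^ a * (1+s) ^ (-c) by ring,
      hk1, hka, show a+1-c = (a+1)+(-c) by ring, Real.rpow_add hγ]
    simp [Real.rpow_add hγ, Real.rpow_one]
    exact Or.inl (by ring)

lemma K_integrable (p : ℝ) (hp : p < -(1/2)) :
    Integrable (fun v : ℝ => ((1:ℝ)+v^2) ^ p) := by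
  have h := integrable_rpow_neg_one_add_norm_sq (E := ℝ) (μ := volume)
    (r := -2*p) (by norm_num; linarith)
  refine h.congr (Filter.Eventually.of_forall fun v => ?_)
  norm_num [Real.norm_eq_abs, sq_abs]

lemma gauss_int {p : ℝ} (A M cc : ℝ) (hp : p < -(1/2)) (hA : 0 < A) (hM : 0 < M) :
    Integrable (fun u : ℝ => (A*(u - cc)^2 + M) ^ p) ∧
    ∫ u : ℝ, (A*(u-cc)^2+M) ^ p
      = A ^ (-(1/2):ℝ) * M ^ (p+1/2) * ∫ v : ℝ, ((1:ℝ)+v^2) ^ p := by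
  have hK : Integrable (fun v : ℝ => ((1:ℝ)+v^2) ^ p) := K_integrable p hp
  set f : ℝ → ℝ := fun u : ℝ => (A*u^2 + M) ^ p with hf
  set k : ℝ := (M/A) ^ ((1:ℝ)/2) with hk
  have hk0 : 0 < k := rpow_pos_of_pos (div_pos hM hA) _
  have hAk : ∀ v : ℝ, A * (k*v)^2 + M = M * (1 + v^2) := by
    intro v
    have hk2 : k^2 = M/A := by
      rw [hk, ← Real.rpow_natCast ((M/A) ^ ((1:ℝ)/2)) 2, ← Real.rpow_mul (div_pos hM hA).le]
      norm_num
    have : A * (k*v)^2 = A * k^2 * v^2 := by ring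
    rw [this, hk2]
    field_simp
    ring
  have hfk : (fun v : ℝ => f (k*v)) = fun v : ℝ => M ^ p * ((1:ℝ)+v^2) ^ p := by
    funext v
    show (A*(k*v)^2 + M) ^ p = _
    rw [hAk v, Real.mul_rpow hM.le (by positivity)]
  have hfint : Integrable f := by
    rw [← integrable_comp_mul_left_iff f hk0.ne']
    rw [hfk]
    exact hK.const_mul _
  have hfval : ∫ u : ℝ, f u = k * M ^ p * ∫ v : ℝ, ((1:ℝ)+v^2) ^ p := by
    have := MeasureTheory.Measure.integral_comp_mul_left f k
    rw [hfk, smul_eq_mul, abs_of_pos (inv_pos.mpr hk0)] at this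
    rw [integral_const_mul] at this
    have h2 : ∫ u : ℝ, f u = k * (M ^ p * ∫ v : ℝ, ((1:ℝ)+v^2) ^ p) := by
      field_simp at this ⊢
      linarith [this]
    rw [h2]; ring
  constructor
  · have : (fun u : ℝ => (A*(u - cc)^2 + M) ^ p) = fun u => f (u - cc) := rfl
    rw [this]
    exact hfint.comp_sub_right cc
  · have htr : ∫ u : ℝ, f (u - cc) = ∫ u : ℝ, f u := integral_sub_right_eq_self f cc
    have : (fun u : ℝ => (A*(u - cc)^2 + M) ^ p) = fun u => f (u - cc) := rfl
    rw [this, htr, hfval]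
    have hkval : k = A ^ (-(1/2):ℝ) * M ^ ((1:ℝ)/2) := by
      rw [hk, Real.div_rpow hM.le hA.le, Real.rpow_neg hA.le, div_eq_mul_inv]
      ring
    rw [hkval, show p + 1/2 = (1:ℝ)/2 + p by ring, Real.rpow_add hM]
    ring

lemma key (r1 r2 η1 η2 : ℝ)
    (hη2 : -1 < η2) (hη1 : -(3/2) < η1)
    (hr2 : η2 + 3/2 < r2) (hr1 : η1 + 2 < r1)
    (b1 b2 b3 : ℝ) (hb1 : 0 < b1) (hd : 0 < b1 * b2 - b3 ^ 2) :
    IntegrableOn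
      (fun y : ℝ × ℝ × ℝ =>
        (y.1 + b1) ^ (-r1 + r2) *
          ((y.1 + b1) * (y.2.1 + b2) - (y.2.2 + b3) ^ 2) ^ (-r2) *
        (y.1 ^ (η1 - η2) * (y.1 * y.2.1 - y.2.2 ^ 2) ^ η2))
      {y : ℝ × ℝ × ℝ | 0 < y.1 ∧ 0 < y.1 * y.2.1 - y.2.2 ^ 2} volume ∧
    (∫ y in {y : ℝ × ℝ × ℝ | 0 < y.1 ∧ 0 < y.1 * y.2.1 - y.2.2 ^ 2},
        (y.1 + b1) ^ (-r1 + r2) *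
          ((y.1 + b1) * (y.2.1 + b2) - (y.2.2 + b3) ^ 2) ^ (-r2) *
        (y.1 ^ (η1 - η2) * (y.1 * y.2.1 - y.2.2 ^ 2) ^ η2))
      = ((∫ s in Ioi (0:ℝ), s ^ (η1+1/2) * (1+s) ^ (-(r1-1/2))) *
         (∫ s in Ioi (0:ℝ), s ^ η2 * (1+s) ^ (-r2)) *
         (∫ v : ℝ, ((1:ℝ)+v^2) ^ (η2+1-r2)))
        * (b1 ^ ((η1 - r1) - (η2 - r2)) * (b1 * b2 - b3 ^ 2) ^ (η2 - r2)) *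
          (b1 * b2 - b3 ^ 2) ^ ((3:ℝ)/2) := by
  set d : ℝ := b1 * b2 - b3 ^ 2 with hd_def
  set D : ℝ := d / b1 with hD_def
  have hD : 0 < D := div_pos hd hb1
  set B1 : ℝ := ∫ s in Ioi (0:ℝ), s ^ (η1+1/2) * (1+s) ^ (-(r1-1/2)) with hB1_def
  set B2 : ℝ := ∫ s in Ioi (0:ℝ), s ^ η2 * (1+s) ^ (-r2) with hB2_def
  set K : ℝ := ∫ v : ℝ, ((1:ℝ)+v^2) ^ (η2+1-r2) with hK_def
  set F : ℝ × ℝ × ℝ → ℝ := fun y =>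
      (y.1 + b1) ^ (-r1 + r2) *
        ((y.1 + b1) * (y.2.1 + b2) - (y.2.2 + b3) ^ 2) ^ (-r2) *
      (y.1 ^ (η1 - η2) * (y.1 * y.2.1 - y.2.2 ^ 2) ^ η2) with hF_def
  set S : Set (ℝ × ℝ × ℝ) := {y | 0 < y.1 ∧ 0 < y.1 * y.2.1 - y.2.2 ^ 2} with hS_def
  have hSmeas : MeasurableSet S := by
    have h1 : MeasurableSet {y : ℝ × ℝ × ℝ | 0 < y.1} :=
      measurableSet_lt measurable_const measurable_fst
    have h2 : MeasurableSet {y : ℝ × ℝ × ℝ | 0 < y.1 * y.2.1 - y.2.2 ^ 2} :=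
      measurableSet_lt measurable_const (by fun_prop)
    have hinter : S = {y : ℝ × ℝ × ℝ | 0 < y.1} ∩ {y : ℝ × ℝ × ℝ | 0 < y.1 * y.2.1 - y.2.2 ^ 2} := by
      ext y; simp [hS_def, mem_setOf_eq]
    rw [hinter]; exact h1.inter h2
  have hFmeas : Measurable F := by rw [hF_def]; fun_prop
  set G : ℝ × ℝ × ℝ → ℝ := S.indicator F with hG_def
  have hGmeas : Measurable G := hFmeas.indicator hSmeas
  have hFpos : ∀ y ∈ S, 0 < F y := by
    rintro ⟨x, y2, u⟩ ⟨hx, hdet⟩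
    have h1 : 0 < x + b1 := by dsimp at hx; linarith
    have h2 : 0 < (x + b1) * (y2 + b2) - (u + b3) ^ 2 := det_add_pos hx hdet hb1 hd
    have h3 : (0:ℝ) < x := hx
    exact mul_pos (mul_pos (rpow_pos_of_pos h1 _) (rpow_pos_of_pos h2 _))
      (mul_pos (rpow_pos_of_pos h3 _) (rpow_pos_of_pos hdet _))
  have hGnonneg : ∀ y, 0 ≤ G y := by
    intro y
    rw [hG_def]
    by_cases hy : y ∈ S
    · rw [indicator_of_mem hy]; exact (hFpos y hy).le
    · rw [indicator_of_notMem hy]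
  have hp2 : η2 + 1 - r2 < -(1/2) := by linarith
  have slice_eq : ∀ (x : ℝ), 0 < x → ∀ u : ℝ,
      (fun y2 : ℝ => G (x, (y2, u))) =
        (Ioi (u^2/x)).indicator (fun y2 => F (x, (y2, u))) := by
    intro x hx u
    funext y2
    rw [hG_def]
    by_cases h : u^2/x < y2
    · have hdet : 0 < x * y2 - u^2 := by
        have := (div_lt_iff₀ hx).mp h
        nlinarith
      have hmem : (x, (y2, u)) ∈ S := ⟨hx, hdet⟩
      rw [indicator_of_mem hmem, indicator_of_mem (by exact h)]
    · have hnmem : (x, (y2, u)) ∉ S := by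
        intro hc
        obtain ⟨-, hdet⟩ := hc
        apply h
        rw [div_lt_iff₀ hx]
        simp only [hS_def, mem_setOf_eq] at hdet
        nlinarith
      rw [indicator_of_notMem hnmem, indicator_of_notMem (by simpa using h)]
  have hγid : ∀ (x : ℝ), 0 < x → ∀ u : ℝ,
      (x+b1)*(u^2/x+b2) - (u+b3)^2 = b1/x*(u - x*b3/b1)^2 + (x+b1)*D := by
    intro x hx u
    rw [hD_def, hd_def]
    field_simp
    ring
  have hγpos : ∀ (x : ℝ), 0 < x → ∀ u : ℝ, 0 < (x+b1)*(u^2/x+b2) - (u+b3)^2 := by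
    intro x hx u
    rw [hγid x hx u]
    have h1 : 0 ≤ b1/x*(u - x*b3/b1)^2 := by positivity
    have h2 : 0 < (x+b1)*D := mul_pos (by linarith) hD
    linarith
  have inner_y2 : ∀ (x : ℝ), 0 < x → ∀ u : ℝ,
      IntegrableOn (fun y2 => F (x, (y2, u))) (Ioi (u^2/x)) volume ∧
      ∫ y2 in Ioi (u^2/x), F (x, (y2, u))
        = ((x+b1)^(-r1+r2) * x^η1 * B2) * ((x+b1)^(-(η2+1)) *
            ((x+b1)*(u^2/x+b2) - (u+b3)^2)^(η2+1-r2)) := by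
    intro x hx u
    have hα : 0 < x + b1 := by linarith
    set m : ℝ := u^2/x with hm
    set γ : ℝ := (x+b1)*(m+b2) - (u+b3)^2 with hγ
    have hγ0 : 0 < γ := hγpos x hx u
    have hSB := scaled_beta (a := η2) (c := r2) (x+b1) γ hη2 (by linarith) hα hγ0
    have hMP := measurePreserving_add_right (volume : Measure ℝ) m
    have hME := measurableEmbedding_addRight m
    have hpre : (fun s : ℝ => s + m) ⁻¹' (Ioi m) = Ioi 0 := by
      ext s; simp [mem_preimage, mem_Ioi, lt_add_iff_pos_left]
    have e3 : x^(η1-η2) * x^η2 = x^η1 := by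
      rw [← Real.rpow_add hx]; norm_num
    have hcmp : ∀ s ∈ Ioi (0:ℝ), F (x, (s + m, u))
        = ((x+b1)^(-r1+r2) * x^η1) * (s^η2 * ((x+b1)*s + γ)^(-r2)) := by
      intro s hs
      have hs0 : (0:ℝ) < s := hs
      rw [hF_def]
      dsimp only
      have e1 : (x+b1)*((s+m)+b2) - (u+b3)^2 = (x+b1)*s + γ := by rw [hγ]; ring
      have e2 : x*(s+m) - u^2 = x*s := by rw [hm]; field_simp; ring
      rw [e1, e2, Real.mul_rpow hx.le hs0.le,
        show x^(η1-η2) * (x^η2 * s^η2) = (x^(η1-η2) * x^η2) * s^η2 by ring, e3]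
      ring
    constructor
    · have hiff := hMP.integrableOn_comp_preimage hME
        (f := fun y2 => F (x, (y2, u))) (s := Ioi m)
      rw [hpre] at hiff
      rw [← hiff]
      exact IntegrableOn.congr_fun (hSB.1.const_mul _)
        (fun s hs => (hcmp s hs).symm) measurableSet_Ioi
    · have hval := hMP.setIntegral_preimage_emb hME (fun y2 => F (x, (y2, u))) (Ioi m)
      rw [hpre] at hval
      rw [← hval, setIntegral_congr_fun measurableSet_Ioi hcmp, integral_const_mul, hSB.2]
      ring
  set CB : ℝ := B2 * K * b1^(-(1/2):ℝ) * D^(η2+3/2-r2) with hCB_def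
  set c2 : ℝ → ℝ := fun x => CB * (x^(η1+1/2) * (x+b1)^(-(r1-1/2))) with hc2_def
  have level2 : ∀ (x : ℝ), 0 < x →
      Integrable (fun z : ℝ × ℝ => G (x, z)) (volume : Measure (ℝ × ℝ)) ∧
      (∫ z : ℝ × ℝ, G (x, z)) = c2 x := by
    intro x hx
    have hα : 0 < x + b1 := by linarith
    set cst : ℝ := (x+b1)^(-r1+r2) * x^η1 * B2 * (x+b1)^(-(η2+1)) with hcst_def
    set jval : ℝ → ℝ := fun u => cst *
        (b1/x*(u - x*b3/b1)^2 + (x+b1)*D)^(η2+1-r2) with hjval_def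
    have hGauss := gauss_int (p := η2+1-r2) (b1/x) ((x+b1)*D) (x*b3/b1)
      hp2 (div_pos hb1 hx) (mul_pos hα hD)
    have hslice_int : ∀ u : ℝ, Integrable (fun y2 => G (x, (y2, u))) volume := by
      intro u
      rw [slice_eq x hx u]
      exact (integrable_indicator_iff measurableSet_Ioi).2 (inner_y2 x hx u).1
    have hslice_val : ∀ u : ℝ, (∫ y2 : ℝ, G (x, (y2, u))) = jval u := by
      intro u
      rw [slice_eq x hx u, integral_indicator measurableSet_Ioi, (inner_y2 x hx u).2,
        hjval_def]
      dsimp only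
      rw [hγid x hx u, hcst_def]
      ring
    have hmeasz : AEStronglyMeasurable (fun z : ℝ × ℝ => G (x, z))
        ((volume : Measure ℝ).prod (volume : Measure ℝ)) :=
      (hGmeas.comp measurable_prodMk_left).aestronglyMeasurable
    have hJint : Integrable jval volume := by
      rw [hjval_def]; exact hGauss.1.const_mul _
    have hint2 : Integrable (fun z : ℝ × ℝ => G (x, z))
        ((volume : Measure ℝ).prod (volume : Measure ℝ)) := by
      rw [integrable_prod_iff' hmeasz]
      constructor
      · exact ae_of_all _ hslice_int
      · have heq : (fun u : ℝ => ∫ y2 : ℝ, ‖G (x, (y2, u))‖) = jval := by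
          funext u
          rw [← hslice_val u]
          exact integral_congr_ae (ae_of_all _ fun y2 => norm_of_nonneg (hGnonneg _))
        rw [heq]; exact hJint
    have hint2' : Integrable (fun z : ℝ × ℝ => G (x, z)) (volume : Measure (ℝ × ℝ)) := by
      rw [Measure.volume_eq_prod]; exact hint2
    refine ⟨hint2', ?_⟩
    have hval2 : (∫ z : ℝ × ℝ, G (x, z)) = ∫ u : ℝ, jval u := by
      rw [Measure.volume_eq_prod, integral_prod_symm _ hint2]
      exact integral_congr_ae (ae_of_all _ fun u => hslice_val u)
    rw [hval2, hjval_def]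
    dsimp only
    rw [integral_const_mul, hGauss.2]
    -- now pure rpow algebra
    have e1 : (b1/x)^(-(1/2):ℝ) = b1^(-(1/2):ℝ) * x^((1:ℝ)/2) := by
      rw [Real.div_rpow hb1.le hx.le, div_eq_mul_inv, ← Real.rpow_neg hx.le, neg_neg]
    have e2 : ((x+b1)*D)^(η2+1-r2+1/2) = (x+b1)^(η2+3/2-r2) * D^(η2+3/2-r2) := by
      rw [Real.mul_rpow hα.le hD.le]
      congr 2 <;> ring
    have e3 : x^η1 * x^((1:ℝ)/2) = x^(η1+1/2) := by rw [← Real.rpow_add hx]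
    have e4 : (x+b1)^(-r1+r2) * (x+b1)^(-(η2+1)) * (x+b1)^(η2+3/2-r2)
        = (x+b1)^(-(r1-1/2)) := by
      rw [← Real.rpow_add hα, ← Real.rpow_add hα]
      congr 1; ring
    rw [hcst_def, e1, e2, hc2_def, hCB_def]
    dsimp only
    rw [← e3, ← e4]
    ring
  have hzero : ∀ x : ℝ, ¬ (0 < x) → (fun z : ℝ × ℝ => G (x, z)) = (fun _ => (0:ℝ)) := by
    intro x hx
    funext z
    rw [hG_def]
    exact indicator_of_notMem (fun hc => hx hc.1) F
  have houter_slice : ∀ x : ℝ, Integrable (fun z : ℝ × ℝ => G (x, z))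
      (volume : Measure (ℝ × ℝ)) := by
    intro x
    by_cases hx : 0 < x
    · exact (level2 x hx).1
    · rw [hzero x hx]; exact integrable_zero _ _ _
  have hSB1 := scaled_beta (a := η1+1/2) (c := r1-1/2) 1 b1
    (by linarith) (by linarith) one_pos hb1
  have hc2shape : ∀ x ∈ Ioi (0:ℝ), CB * (fun s : ℝ => s^(η1+1/2) * ((1:ℝ)*s+b1)^(-(r1-1/2))) x = c2 x := by
    intro x hx
    rw [hc2_def]
    dsimp only
    rw [one_mul]
  have houter_int : IntegrableOn c2 (Ioi (0:ℝ)) volume := by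
    refine IntegrableOn.congr_fun (hSB1.1.const_mul CB) hc2shape measurableSet_Ioi
  have hinner_eq : (fun x : ℝ => ∫ z : ℝ × ℝ, G (x, z)) = (Ioi (0:ℝ)).indicator c2 := by
    funext x
    by_cases hx : 0 < x
    · rw [indicator_of_mem (mem_Ioi.mpr hx), (level2 x hx).2]
    · rw [indicator_of_notMem (fun hc => hx (mem_Ioi.mp hc)), hzero x hx]
      simp
  have houter_norm_eq : (fun x : ℝ => ∫ z : ℝ × ℝ, ‖G (x, z)‖) = (Ioi (0:ℝ)).indicator c2 := by
    rw [← hinner_eq]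
    funext x
    exact integral_congr_ae (ae_of_all _ fun z => norm_of_nonneg (hGnonneg _))
  have hGaesm : AEStronglyMeasurable G
      ((volume : Measure ℝ).prod (volume : Measure (ℝ × ℝ))) :=
    hGmeas.aestronglyMeasurable
  have hGint : Integrable G ((volume : Measure ℝ).prod (volume : Measure (ℝ × ℝ))) := by
    rw [integrable_prod_iff hGaesm]
    refine ⟨ae_of_all _ houter_slice, ?_⟩
    rw [houter_norm_eq]
    exact (integrable_indicator_iff measurableSet_Ioi).2 houter_int
  have hGint' : Integrable G (volume : Measure (ℝ × ℝ × ℝ)) := by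
    rw [Measure.volume_eq_prod]; exact hGint
  constructor
  · exact (integrable_indicator_iff hSmeas).1 hGint'
  · have h0 : (∫ y in S, F y) = ∫ y, G y := (integral_indicator hSmeas).symm
    rw [hF_def] at h0
    rw [h0]
    have h1 : (∫ y, G y) = ∫ x : ℝ, ∫ z : ℝ × ℝ, G (x, z) := by
      rw [Measure.volume_eq_prod]
      exact integral_prod _ hGint
    rw [h1, hinner_eq, integral_indicator measurableSet_Ioi,
      setIntegral_congr_fun measurableSet_Ioi (fun x hx => (hc2shape x hx).symm),
      integral_const_mul, hSB1.2]
    -- final algebra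
    rw [one_rpow, one_mul]
    have hDd : D^(η2+3/2-r2) = d^(η2-r2) * d^((3:ℝ)/2) * b1^(-(η2+3/2-r2)) := by
      rw [hD_def, Real.div_rpow hd.le hb1.le, div_eq_mul_inv, ← Real.rpow_neg hb1.le,
        ← Real.rpow_add hd]
      congr 2
      ring
    have hb1c : b1^(-(1/2):ℝ) * b1^(-(η2+3/2-r2)) * b1^(η1+1/2+1-(r1-1/2))
        = b1^((η1-r1)-(η2-r2)) := by
      rw [← Real.rpow_add hb1, ← Real.rpow_add hb1]
      congr 1; ring
    rw [hCB_def, hDd, ← hb1c]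
    ring




theorem stmt_11 (r1 r2 η1 η2 : ℝ)
    (hη2 : -1 < η2) (hη1 : -(3/2) < η1)
    (hr2 : η2 + 3/2 < r2) (hr1 : η1 + 2 < r1) :
    ∃ C : ℝ, 0 < C ∧ ∀ b : ℝ × ℝ × ℝ,
      0 < b.1 → 0 < b.1 * b.2.1 - b.2.2 ^ 2 →
      IntegrableOn
        (fun y : ℝ × ℝ × ℝ =>
          (y.1 + b.1) ^ (-r1 + r2) *
            ((y.1 + b.1) * (y.2.1 + b.2.1) - (y.2.2 + b.2.2) ^ 2) ^ (-r2) *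
          (y.1 ^ (η1 - η2) * (y.1 * y.2.1 - y.2.2 ^ 2) ^ η2))
        {y : ℝ × ℝ × ℝ | 0 < y.1 ∧ 0 < y.1 * y.2.1 - y.2.2 ^ 2} volume ∧
      (∫ y in {y : ℝ × ℝ × ℝ | 0 < y.1 ∧ 0 < y.1 * y.2.1 - y.2.2 ^ 2},
          (y.1 + b.1) ^ (-r1 + r2) *
            ((y.1 + b.1) * (y.2.1 + b.2.1) - (y.2.2 + b.2.2) ^ 2) ^ (-r2) *
          (y.1 ^ (η1 - η2) * (y.1 * y.2.1 - y.2.2 ^ 2) ^ η2))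
        = C * (b.1 ^ ((η1 - r1) - (η2 - r2)) * (b.1 * b.2.1 - b.2.2 ^ 2) ^ (η2 - r2)) *
            (b.1 * b.2.1 - b.2.2 ^ 2) ^ ((3:ℝ)/2) := by
  have hB1pos : 0 < ∫ s in Ioi (0:ℝ), s ^ (η1+1/2) * (1+s) ^ (-(r1-1/2)) :=
    beta_pos (by linarith) (by linarith)
  have hB2pos : 0 < ∫ s in Ioi (0:ℝ), s ^ η2 * (1+s) ^ (-r2) :=
    beta_pos (by linarith) (by linarith)
  have hKint : Integrable (fun v : ℝ => ((1:ℝ)+v^2) ^ (η2+1-r2)) :=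
    K_integrable _ (by linarith)
  have hKpos : 0 < ∫ v : ℝ, ((1:ℝ)+v^2) ^ (η2+1-r2) := by
    rw [← setIntegral_univ]
    rw [setIntegral_pos_iff_support_of_nonneg_ae]
    · have hs : Function.support (fun v : ℝ => ((1:ℝ)+v^2) ^ (η2+1-r2)) = univ := by
        ext v
        simp only [Function.mem_support, mem_univ, iff_true]
        exact ne_of_gt (rpow_pos_of_pos (by positivity) _)
      rw [hs, inter_univ]
      simp
    · exact ae_of_all _ (fun v => rpow_nonneg (by positivity) _)
    · exact hKint.integrableOn
  refine ⟨(∫ s in Ioi (0:ℝ), s ^ (η1+1/2) * (1+s) ^ (-(r1-1/2))) *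
      (∫ s in Ioi (0:ℝ), s ^ η2 * (1+s) ^ (-r2)) *
      (∫ v : ℝ, ((1:ℝ)+v^2) ^ (η2+1-r2)), mul_pos (mul_pos hB1pos hB2pos) hKpos, ?_⟩
  rintro ⟨b1, b2, b3⟩ hb1 hd
  exact key r1 r2 η1 η2 hη2 hη1 hr2 hr1 b1 b2 b3 hb1 hd
end
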